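/- Let r ∈ (0,1) and ρ_D ∈ [0,1], and set ρ_R = (1 + √(1 − 4r(1−r)(1 − ρ_D)))/2. Then: (i) ρ_R ∈ [1/2, 1]; (ii) ρ_R is a strictly increasing function of ρ_D; (iii) if ρ_D < 1 then ρ_R > ρ_D, and ρ_D = 1 if and only if ρ_R = 1; (iv) for fixed ρ_D, ρ_R is minimized over r at r = 1/2, where ρ_R = (1 + √ρ_D)/2. -/
import Mathlib


/-- The random-scan rate as a function of the selection probability and the
deterministic-scan rate. -/
noncomputable def rhoR (r ρD : ℝ) : ℝ :=
  (1 + Real.sqrt (1 - 4 * r * (1 - r) * (1 - ρD))) / 2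

/-- For `r ∈ (0,1)` and `ρ_D ∈ [0,1]`: (i) `ρ_R ∈ [1/2,1]`; (ii) `ρ_R` is strictly
increasing in `ρ_D`; (iii) `ρ_D < 1 → ρ_R > ρ_D`, and `ρ_D = 1 ↔ ρ_R = 1`;
(iv) over `r`, `ρ_R` is minimized at `r = 1/2`, where `ρ_R = (1+√ρ_D)/2`. -/
theorem stmt_10 (r ρD : ℝ) (hr : 0 < r) (hr1 : r < 1) (hρD0 : 0 ≤ ρD) (hρD1 : ρD ≤ 1) :
    (1/2 ≤ rhoR r ρD ∧ rhoR r ρD ≤ 1) ∧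
    (∀ ρ₁ ρ₂ : ℝ, 0 ≤ ρ₁ → ρ₂ ≤ 1 → ρ₁ < ρ₂ → rhoR r ρ₁ < rhoR r ρ₂) ∧
    ((ρD < 1 → ρD < rhoR r ρD) ∧ (ρD = 1 ↔ rhoR r ρD = 1)) ∧
    ((∀ r' : ℝ, 0 < r' → r' < 1 → rhoR (1/2) ρD ≤ rhoR r' ρD) ∧
      rhoR (1/2) ρD = (1 + Real.sqrt ρD) / 2) := by
  have hs : 0 < 4 * r * (1 - r) := by nlinarith
  have hs1 : 4 * r * (1 - r) ≤ 1 := by nlinarith [sq_nonneg (2 * r - 1)]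
  -- the argument of the square root
  have hargL : ∀ ρ : ℝ, 0 ≤ ρ → ρ ≤ 1 → ρ ≤ 1 - 4 * r * (1 - r) * (1 - ρ) := by
    intro ρ hρ hρ1
    nlinarith [mul_nonneg (by linarith : (0:ℝ) ≤ 1 - ρ) (by linarith : (0:ℝ) ≤ 1 - 4 * r * (1 - r))]
  have hargU : ∀ ρ : ℝ, ρ ≤ 1 → 1 - 4 * r * (1 - r) * (1 - ρ) ≤ 1 := by
    intro ρ hρ; nlinarith
  have hD0 : (0:ℝ) ≤ 1 - 4 * r * (1 - r) * (1 - ρD) := le_trans hρD0 (hargL ρD hρD0 hρD1)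
  have hiv2 : rhoR (1/2) ρD = (1 + Real.sqrt ρD) / 2 := by
    unfold rhoR; norm_num
  refine ⟨⟨?_, ?_⟩, ?_, ⟨?_, ?_, ?_⟩, ?_, hiv2⟩
  · unfold rhoR
    have := Real.sqrt_nonneg (1 - 4 * r * (1 - r) * (1 - ρD))
    linarith
  · unfold rhoR
    have h1 : Real.sqrt (1 - 4 * r * (1 - r) * (1 - ρD)) ≤ 1 := by
      have := Real.sqrt_le_sqrt (hargU ρD hρD1)
      rwa [Real.sqrt_one] at this
    linarith
  · intro ρ₁ ρ₂ h₁ h₂ hlt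
    unfold rhoR
    have harg : 1 - 4 * r * (1 - r) * (1 - ρ₁) < 1 - 4 * r * (1 - r) * (1 - ρ₂) := by
      nlinarith
    have := Real.sqrt_lt_sqrt (le_trans h₁ (hargL ρ₁ h₁ (le_of_lt (lt_of_lt_of_le hlt h₂)))) harg
    linarith
  · intro hlt
    unfold rhoR
    have hsq := Real.sq_sqrt hD0
    have hnn := Real.sqrt_nonneg (1 - 4 * r * (1 - r) * (1 - ρD))
    rcases lt_or_ge ρD (1/2) with h | h
    · linarith
    · have hkey : (2 * ρD - 1) ^ 2 < 1 - 4 * r * (1 - r) * (1 - ρD) := by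
        nlinarith [hargL ρD hρD0 hρD1]
      nlinarith
  · intro h
    subst h
    unfold rhoR
    norm_num
  · intro h
    unfold rhoR at h
    have h1 : Real.sqrt (1 - 4 * r * (1 - r) * (1 - ρD)) = 1 := by linarith
    have hsq := Real.sq_sqrt hD0
    rw [h1] at hsq
    nlinarith
  · intro r' hr' hr1'
    have hs1' : 4 * r' * (1 - r') ≤ 1 := by nlinarith [sq_nonneg (2 * r' - 1)]
    rw [hiv2]
    unfold rhoR
    have : Real.sqrt ρD ≤ Real.sqrt (1 - 4 * r' * (1 - r') * (1 - ρD)) := by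
      apply Real.sqrt_le_sqrt; nlinarith
    linarith
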